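/- Let β ≥ 1 and 1/2 ≤ r ≤ 1. Let E, H be independent Bernoulli variables with P(E=1)=1−r and P(H=1)=1/2. For any event M: (β·P(M=1,E=1) + P(M=2,E=2))/β + β·P(M=1,H=1) + P(M=2,H=2) ≤ 1 + r/(2β) + β/2 − r/2. -/

import Mathlib

open MeasureTheory

lemma gbm_aux_compl {Ω : Type*} [MeasurableSpace Ω]
    (μ : Measure Ω) [IsProbabilityMeasure μ] {s t : Set Ω}
    (hs : MeasurableSet s) (ht : MeasurableSet t) :
    (μ (sᶜ ∩ tᶜ)).toReal + (μ s).toReal + (μ t).toReal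
      = 1 + (μ (s ∩ t)).toReal := by
  have h : μ (sᶜ ∩ tᶜ) + (μ s + μ t) = 1 + μ (s ∩ t) := by
    rw [← measure_union_add_inter s ht, ← Set.compl_union, ← add_assoc,
      add_comm (μ (s ∪ t)ᶜ) (μ (s ∪ t)), measure_add_measure_compl (hs.union ht),
      measure_univ]
  have h' := congrArg ENNReal.toReal h
  rw [ENNReal.toReal_add (measure_ne_top _ _) (by finiteness),
    ENNReal.toReal_add (measure_ne_top _ _) (measure_ne_top _ _),
    ENNReal.toReal_add (by norm_num) (measure_ne_top _ _), ENNReal.toReal_one] at h'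
  linarith

/-- Bound C_e/β + C_h in the GBM analysis. -/
theorem gbm_bound_Ce_Ch {Ω : Type*} [MeasurableSpace Ω]
    (μ : Measure Ω) [IsProbabilityMeasure μ]
    (β r : ℝ) (hβ : 1 ≤ β) (hr : 1/2 ≤ r) (hr1 : r ≤ 1)
    (M E H : Set Ω) (hM : MeasurableSet M) (hE : MeasurableSet E)
    (hH : MeasurableSet H)
    (hPE : (μ E).toReal = 1 - r) (hPH : (μ H).toReal = 1/2)
    (hind : μ (E ∩ H) = μ E * μ H) :
    (β * (μ (M ∩ E)).toReal + (μ (Mᶜ ∩ Eᶜ)).toReal) / β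
        + β * (μ (M ∩ H)).toReal + (μ (Mᶜ ∩ Hᶜ)).toReal
      ≤ 1 + r / (2 * β) + β / 2 - r / 2 := by
  have hβ0 : (0:ℝ) < β := by linarith
  -- notation
  set a := (μ (M ∩ E)).toReal with ha
  set b := (μ (Mᶜ ∩ Eᶜ)).toReal with hb
  set c := (μ (M ∩ H)).toReal with hc
  set d := (μ (Mᶜ ∩ Hᶜ)).toReal with hd
  set tm := (μ M).toReal with htm
  have e1 : b + tm + (1 - r) = 1 + a := by
    have := gbm_aux_compl μ hM hE; rw [hPE] at this; linarith
  have e2 : d + tm + 1/2 = 1 + c := by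
    have := gbm_aux_compl μ hM hH; rw [hPH] at this; linarith
  have hEH : (μ (E ∩ H)).toReal = (1 - r) * (1/2) := by
    rw [hind, ENNReal.toReal_mul, hPE, hPH]
  have hkey : a + c ≤ tm + (1 - r) * (1/2) := by
    have h := measure_union_add_inter (μ := μ) (M ∩ E) (hM.inter hH)
    have hle : μ ((M ∩ E) ∪ (M ∩ H)) + μ ((M ∩ E) ∩ (M ∩ H))
        ≤ μ M + μ (E ∩ H) := by
      refine add_le_add (measure_mono ?_) (measure_mono ?_)
      · exact Set.union_subset Set.inter_subset_left Set.inter_subset_left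
      · intro x hx
        exact ⟨hx.1.2, hx.2.2⟩
    rw [h] at hle
    have := ENNReal.toReal_mono (by finiteness) hle
    rw [ENNReal.toReal_add (measure_ne_top _ _) (measure_ne_top _ _),
      ENNReal.toReal_add (measure_ne_top _ _) (measure_ne_top _ _), hEH] at this
    linarith
  have hc2 : c ≤ 1/2 := by
    rw [hc, ← hPH]
    exact ENNReal.toReal_mono (measure_ne_top _ _) (measure_mono Set.inter_subset_right)
  have hc0 : 0 ≤ c := ENNReal.toReal_nonneg
  have ha0 : 0 ≤ a := ENNReal.toReal_nonneg
  have hrw : (β * a + b) / β + β * c + d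
      = (β * a + b + (β * c + d) * β) / β := by
    field_simp
    ring
  rw [hrw, div_le_iff₀ hβ0]
  have hrhs : (1 + r / (2 * β) + β / 2 - r / 2) * β
      = β + r / 2 + β ^ 2 / 2 - r * β / 2 := by
    field_simp
  rw [hrhs]
  nlinarith [mul_nonneg (by linarith : (0:ℝ) ≤ β + 1) (by linarith : (0:ℝ) ≤ tm + (1 - r) * (1/2) - (a + c)),
    mul_nonneg (by nlinarith : (0:ℝ) ≤ β ^ 2 - 1) (by linarith : (0:ℝ) ≤ 1/2 - c)]
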